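/- Let A be a finite abelian group and ℓ the smallest prime dividing |A|. If A/A[ℓ] is not cyclic, then the restriction map Hom(∧²A, ℚ/ℤ) → ⊕_{H ∈ C} Hom(∧²H, ℚ/ℤ) is NOT injective, where C is the collection of subgroups of A generated by two elements at least one of which has order dividing ℓ. -/

import Mathlib

open scoped DirectSum
/-- `ℚ/ℤ` as `AddCircle (1 : ℚ)`. -/
abbrev QZ := AddCircle (1 : ℚ)

/-- The `ℓ`-torsion subgroup `A[ℓ] = {a : ℓ • a = 0}`. -/
def torsAt (ℓ : ℕ) (A : Type*) [AddCommGroup A] : AddSubgroup A where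
  carrier := {a | ℓ • a = 0}
  zero_mem' := by simp
  add_mem' := by
    intro a b ha hb
    simp only [Set.mem_setOf_eq, smul_add] at *
    rw [ha, hb, add_zero]
  neg_mem' := by
    intro a ha
    simp only [Set.mem_setOf_eq, smul_neg] at *
    rw [ha, neg_zero]


/-- Embedding `ZMod q → ℚ/ℤ`, sending `1` to `1/q`. -/
noncomputable def toQ (q : ℕ) : ZMod q →+ QZ :=
  ZMod.lift q ⟨zmultiplesHom QZ (((q : ℚ)⁻¹ : ℚ) : QZ), by
    show (q : ℤ) • (((q : ℚ)⁻¹ : ℚ) : QZ) = 0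
    rcases eq_or_ne q 0 with h | h
    · simp [h]
    · rw [← AddCircle.coe_zsmul]
      have : ((q : ℤ) • ((q : ℚ)⁻¹) : ℚ) = 1 := by
        rw [zsmul_eq_mul]
        push_cast
        exact mul_inv_cancel₀ (by exact_mod_cast h)
      rw [this]
      exact AddCircle.coe_period 1⟩

lemma toQ_one_ne_zero {q : ℕ} (hq : 1 < q) : toQ q 1 ≠ 0 := by
  have h1 : toQ q (1 : ZMod q) = (((q : ℚ)⁻¹ : ℚ) : QZ) := by
    have : (1 : ZMod q) = ((1 : ℤ) : ZMod q) := by push_cast; rfl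
    rw [this, toQ, ZMod.lift_coe]
    simp
  rw [h1]
  intro h
  rw [AddCircle.coe_eq_zero_iff] at h
  obtain ⟨n, hn⟩ := h
  have hq0 : (0 : ℚ) < (q : ℚ)⁻¹ := by positivity
  have hq1 : ((q : ℚ)⁻¹ : ℚ) < 1 := by
    rw [inv_lt_one_iff₀]
    right; exact_mod_cast hq
  rw [zsmul_eq_mul, mul_one] at hn
  have h0n : (0 : ℤ) < n := by exact_mod_cast hn ▸ hq0
  have h1n : n < 1 := by exact_mod_cast hn ▸ hq1
  omega
open scoped DirectSum

lemma exists_surj_pair (B : Type*) [AddCommGroup B] [Finite B] (hnc : ¬ IsAddCyclic B) :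
    ∃ q : ℕ, 1 < q ∧ ∃ ψ : B →+ ZMod q × ZMod q, ∃ u v : B,
      ψ u = (1, 0) ∧ ψ v = (0, 1) := by
  classical
  obtain ⟨ι, hι, n, hn, ⟨e⟩⟩ := AddCommGroup.equiv_directSum_zmod_of_finite' B
  by_cases hcop : Pairwise (Function.onFun Nat.Coprime n)
  · exfalso
    apply hnc
    have h1 : IsAddCyclic (⨁ i, ZMod (n i)) := by
      have := (ZMod.prodEquivPi n hcop).toAddEquiv.trans
        (DirectSum.addEquivProd (fun i => ZMod (n i))).symm
      exact isAddCyclic_of_surjective this.toAddMonoidHom this.surjective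
    exact isAddCyclic_of_surjective e.symm.toAddMonoidHom e.symm.surjective
  · rw [Pairwise] at hcop
    push_neg at hcop
    obtain ⟨i, j, hij, hq⟩ := hcop
    change ¬ Nat.gcd (n i) (n j) = 1 at hq
    set q := Nat.gcd (n i) (n j) with hqdef
    have hq0 : q ≠ 0 := by
      intro h
      have := Nat.eq_zero_of_gcd_eq_zero_left (hqdef ▸ h)
      have := hn i; omega
    have hq1 : 1 < q := by
      rcases Nat.lt_or_ge q 2 with h | h
      · interval_cases q
        · exact absurd rfl hq0
        · exact absurd rfl hq
      · omega
    let c1 : ZMod (n i) →+ ZMod q := (ZMod.castHom (show q ∣ n i from Nat.gcd_dvd_left _ _) (ZMod q)).toAddMonoidHom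
    let c2 : ZMod (n j) →+ ZMod q := (ZMod.castHom (show q ∣ n j from Nat.gcd_dvd_right _ _) (ZMod q)).toAddMonoidHom
    let pi' : (⨁ k, ZMod (n k)) →+ ZMod (n i) :=
      (DirectSum.component ℕ ι (fun k => ZMod (n k)) i).toAddMonoidHom
    let pj : (⨁ k, ZMod (n k)) →+ ZMod (n j) :=
      (DirectSum.component ℕ ι (fun k => ZMod (n k)) j).toAddMonoidHom
    refine ⟨q, hq1, ((c1.comp pi').prod (c2.comp pj)).comp e.toAddMonoidHom,
      e.symm (DirectSum.lof ℕ ι (fun k => ZMod (n k)) i 1),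
      e.symm (DirectSum.lof ℕ ι (fun k => ZMod (n k)) j 1), ?_, ?_⟩
    · have h1 : pi' (DirectSum.lof ℕ ι (fun k => ZMod (n k)) i 1) = 1 :=
        DirectSum.component.lof_self ℕ i 1
      have h2 : pj (DirectSum.lof ℕ ι (fun k => ZMod (n k)) i 1) = 0 := by
        have := DirectSum.component.of (R := ℕ) (M := fun k => ZMod (n k)) j i 1
        rw [dif_neg hij] at this
        exact this
      have e1 : (ZMod.cast (1 : ZMod (n i)) : ZMod q) = 1 := ZMod.cast_one (show q ∣ n i from Nat.gcd_dvd_left _ _)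
      simp [AddMonoidHom.prod_apply, h1, h2, c1, c2, e1]
    · have h1 : pi' (DirectSum.lof ℕ ι (fun k => ZMod (n k)) j 1) = 0 := by
        have := DirectSum.component.of (R := ℕ) (M := fun k => ZMod (n k)) i j 1
        rw [dif_neg hij.symm] at this
        exact this
      have h2 : pj (DirectSum.lof ℕ ι (fun k => ZMod (n k)) j 1) = 1 :=
        DirectSum.component.lof_self ℕ j 1
      have e2 : (ZMod.cast (1 : ZMod (n j)) : ZMod q) = 1 := ZMod.cast_one (show q ∣ n j from Nat.gcd_dvd_right _ _)
      simp [AddMonoidHom.prod_apply, h1, h2, c1, c2, e2]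



/-- If `A/A[ℓ]` is not cyclic, there is a nonzero alternating pairing on `A` vanishing
on every subgroup `⟨a, b⟩` with `ord(b) ∣ ℓ` (so the restriction map is not injective). -/
theorem stmt6 (A : Type*) [AddCommGroup A] [Fintype A] (ℓ : ℕ)
    (hℓ : ℓ.Prime) (hdvd : ℓ ∣ Fintype.card A)
    (hmin : ∀ p : ℕ, p.Prime → p ∣ Fintype.card A → ℓ ≤ p)
    (hnc : ¬ IsAddCyclic (A ⧸ torsAt ℓ A)) :
    ∃ f : A →+ A →+ QZ, (∀ x, f x x = 0) ∧ f ≠ 0 ∧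
      ∀ a b : A, addOrderOf b ∣ ℓ →
        ∀ x ∈ AddSubgroup.closure {a, b}, ∀ y ∈ AddSubgroup.closure {a, b}, f x y = 0 := by
  classical
  set T := torsAt ℓ A with hT
  let π : A →+ A ⧸ T := QuotientAddGroup.mk' T
  obtain ⟨q, hq1, ψ, u, v, hu, hv⟩ := exists_surj_pair (A ⧸ T) hnc
  let φ : A →+ ZMod q × ZMod q := ψ.comp π
  let f : A →+ A →+ QZ := AddMonoidHom.mk'
    (fun x => AddMonoidHom.mk'
      (fun y => toQ q ((φ x).1 * (φ y).2 - (φ x).2 * (φ y).1))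
      (fun y z => by
        have hφ : φ (y + z) = φ y + φ z := map_add φ y z
        rw [hφ, ← map_add (toQ q)]
        congr 1
        simp only [Prod.fst_add, Prod.snd_add]
        ring))
    (fun x w => by
      ext y
      simp only [AddMonoidHom.mk'_apply, AddMonoidHom.add_apply]
      have hφ : φ (x + w) = φ x + φ w := map_add φ x w
      rw [hφ, ← map_add (toQ q)]
      congr 1
      simp only [Prod.fst_add, Prod.snd_add]
      ring)
  have fdef : ∀ x y : A, f x y = toQ q ((φ x).1 * (φ y).2 - (φ x).2 * (φ y).1) :=
    fun x y => rfl
  refine ⟨f, ?_, ?_, ?_⟩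
  · intro x
    rw [fdef, mul_comm, sub_self, map_zero]
  · obtain ⟨x0, hx0⟩ := QuotientAddGroup.mk'_surjective T u
    obtain ⟨y0, hy0⟩ := QuotientAddGroup.mk'_surjective T v
    intro h0
    have h1 : f x0 y0 = 0 := by rw [h0]; rfl
    rw [fdef] at h1
    have hφx : φ x0 = (1, 0) := by
      show ψ (π x0) = (1, 0)
      rw [show π x0 = u from hx0, hu]
    have hφy : φ y0 = (0, 1) := by
      show ψ (π y0) = (0, 1)
      rw [show π y0 = v from hy0, hv]
    rw [hφx, hφy] at h1
    simp only [mul_one, mul_zero, sub_zero, one_mul] at h1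
    exact toQ_one_ne_zero hq1 h1
  · intro a b hb x hx y hy
    have hbT : b ∈ T := by
      show ℓ • b = 0
      exact addOrderOf_dvd_iff_nsmul_eq_zero.mp hb
    have hφb : φ b = 0 := by
      show ψ (π b) = 0
      have : π b = 0 := (QuotientAddGroup.eq_zero_iff b).mpr hbT
      rw [this, map_zero]
    have key : ∀ z ∈ AddSubgroup.closure ({a, b} : Set A), ∃ m : ℤ, φ z = m • φ a := by
      intro z hz
      have h1 : φ z ∈ AddSubgroup.map φ (AddSubgroup.closure {a, b}) :=
        AddSubgroup.mem_map_of_mem _ hz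
      rw [AddMonoidHom.map_closure, Set.image_pair, hφb] at h1
      have h2 : AddSubgroup.closure ({φ a, (0 : ZMod q × ZMod q)}) ≤
          AddSubgroup.closure {φ a} := by
        rw [AddSubgroup.closure_le]
        rintro w hw
        rcases hw with rfl | rfl
        · exact AddSubgroup.mem_closure_singleton_self _
        · exact (AddSubgroup.closure _).zero_mem
      obtain ⟨m, hm⟩ := AddSubgroup.mem_closure_singleton.mp (h2 h1)
      exact ⟨m, hm.symm⟩
    obtain ⟨m, hm⟩ := key x hx
    obtain ⟨k, hk⟩ := key y hy
    rw [fdef, hm, hk]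
    have : (m • φ a).1 * (k • φ a).2 - (m • φ a).2 * (k • φ a).1 = 0 := by
      simp only [Prod.smul_fst, Prod.smul_snd]
      simp only [zsmul_eq_mul]
      ring
    rw [this, map_zero]
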